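/- Let G be a group, H a nilpotent subgroup of G such that C_G(x) ≤ H for every nontrivial x ∈ H. Then nil_G(x) = H for every nontrivial x ∈ H. -/

import Mathlib

def nilizer {G : Type*} [Group G] (x : G) : Set G :=
  {g | Group.IsNilpotent (Subgroup.closure ({x, g} : Set G))}

def nilSet (G : Type*) [Group G] : Set G :=
  {x | ∀ y : G, Group.IsNilpotent (Subgroup.closure ({x, y} : Set G))}

lemma center_nontriv_of_nilpotent (K : Type*) [Group K] [Nontrivial K]
    (h : Group.IsNilpotent K) : Subgroup.center K ≠ ⊥ := by
  classical
  have hex : ∃ n, (⊤ : Subgroup K).lowerCentralSeries n = ⊥ :=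
    Subgroup.nilpotent_iff_lowerCentralSeries.mp h
  have hbot := Nat.find_spec hex
  have hn0 : Nat.find hex ≠ 0 := by
    intro h0
    rw [h0, Subgroup.lowerCentralSeries_zero] at hbot
    obtain ⟨a, ha⟩ := exists_ne (1 : K)
    apply ha
    have : a ∈ (⊥ : Subgroup K) := hbot ▸ Subgroup.mem_top a
    exact Subgroup.mem_bot.mp this
  obtain ⟨m, hm'⟩ := Nat.exists_eq_succ_of_ne_zero hn0
  have hm : (⊤ : Subgroup K).lowerCentralSeries m ≠ ⊥ := Nat.find_min hex (by omega)
  rw [hm'] at hbot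
  have hcomm : ⁅(⊤ : Subgroup K).lowerCentralSeries m, (⊤ : Subgroup K)⁆ = ⊥ := hbot
  have hle : (⊤ : Subgroup K).lowerCentralSeries m ≤ Subgroup.centralizer (⊤ : Subgroup K) :=
    Subgroup.commutator_eq_bot_iff_le_centralizer.mp hcomm
  intro hc
  apply hm
  rw [eq_bot_iff, ← hc]
  refine hle.trans ?_
  rw [Subgroup.coe_top, Subgroup.centralizer_univ]

theorem stmt8 {G : Type*} [Group G] (H : Subgroup G) (hnil : Group.IsNilpotent H)
    (hc : ∀ x ∈ H, x ≠ 1 → Subgroup.centralizer {x} ≤ H) :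
    ∀ x ∈ H, x ≠ 1 → nilizer x = (H : Set G) := by
  intro x hx hx1
  ext g
  constructor
  · intro hg
    set K := Subgroup.closure ({x, g} : Set G) with hK
    haveI : Group.IsNilpotent K := hg
    have hxK : x ∈ K := Subgroup.subset_closure (Set.mem_insert x _)
    have hgK : g ∈ K := Subgroup.subset_closure (Set.mem_insert_of_mem _ rfl)
    haveI : Nontrivial K :=
      ⟨⟨⟨x, hxK⟩, 1, fun h => hx1 (by simpa using congrArg Subtype.val h)⟩⟩
    have hcenter := center_nontriv_of_nilpotent K ‹Group.IsNilpotent K›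
    rw [← Subgroup.nontrivial_iff_ne_bot] at hcenter
    obtain ⟨z, hz1⟩ := exists_ne (1 : Subgroup.center (K : Subgroup G))
    set w : G := ((z : K) : G) with hw
    have hzx : (z : K) * ⟨x, hxK⟩ = ⟨x, hxK⟩ * (z : K) :=
      ((Subgroup.mem_center_iff.mp z.2) ⟨x, hxK⟩).symm
    have hzH : w ∈ Subgroup.centralizer ({x} : Set G) := by
      rw [Subgroup.mem_centralizer_singleton_iff]
      exact congrArg Subtype.val hzx
    have hzmemH : w ∈ H := hc x hx hx1 hzH
    have hzne1 : w ≠ 1 := by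
      intro h
      apply hz1
      ext
      exact h
    have hzg : (z : K) * ⟨g, hgK⟩ = ⟨g, hgK⟩ * (z : K) :=
      ((Subgroup.mem_center_iff.mp z.2) ⟨g, hgK⟩).symm
    have : g ∈ Subgroup.centralizer ({w} : Set G) := by
      rw [Subgroup.mem_centralizer_singleton_iff]
      exact (congrArg Subtype.val hzg).symm
    exact hc _ hzmemH hzne1 this
  · intro hg
    have hle : Subgroup.closure ({x, g} : Set G) ≤ H := by
      rw [Subgroup.closure_le]
      rintro y (rfl | rfl)
      · exact hx
      · exact hg
    set K := Subgroup.closure ({x, g} : Set G)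
    haveI : Group.IsNilpotent H := hnil
    haveI : Group.IsNilpotent (K.subgroupOf H) := Subgroup.isNilpotent _
    exact nilpotent_of_surjective (K.subgroupOfEquivOfLe hle).toMonoidHom
      (K.subgroupOfEquivOfLe hle).surjective
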